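/- arXiv:2109.09079 — 3 statements merged into one kernel-verified Lean document; each statement's English description precedes it below -/
import Mathlib

section
/- Each k-horizon map φ_k is monotone and concave with respect to the Loewner order: for all positive semidefinite Σ₁ ⪯ Σ₂, φ_k(Σ₁) ⪯ φ_k(Σ₂); and for all α ∈ [0,1] and positive semidefinite Σ₁, Σ₂, φ_k(αΣ₁ + (1−α)Σ₂) ⪰ α φ_k(Σ₁) + (1−α) φ_k(Σ₂). -/
open Matrix BigOperators

noncomputable section

/-- `R̃(Σ) = C (A Σ Aᵀ + Q) Cᵀ + R`. -/
def Rt {ny nz : ℕ} (A Q : Matrix (Fin ny) (Fin ny) ℝ)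
    (C : Matrix (Fin nz) (Fin ny) ℝ) (R : Matrix (Fin nz) (Fin nz) ℝ)
    (S : Matrix (Fin ny) (Fin ny) ℝ) : Matrix (Fin nz) (Fin nz) ℝ :=
  C * (A * S * Aᵀ + Q) * Cᵀ + R

/-- Optimal unknown-input filter gain `M(Σ)`. -/
def Mg {ny nz nd : ℕ} (A Q : Matrix (Fin ny) (Fin ny) ℝ) (G : Matrix (Fin ny) (Fin nd) ℝ)
    (C : Matrix (Fin nz) (Fin ny) ℝ) (R : Matrix (Fin nz) (Fin nz) ℝ)
    (S : Matrix (Fin ny) (Fin ny) ℝ) : Matrix (Fin nd) (Fin nz) ℝ :=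
  ((C * G)ᵀ * (Rt A Q C R S)⁻¹ * (C * G))⁻¹ * (C * G)ᵀ * (Rt A Q C R S)⁻¹

/-- Optimal state filter gain `K(Σ)`. -/
def Kg {ny nz : ℕ} (A Q : Matrix (Fin ny) (Fin ny) ℝ)
    (C : Matrix (Fin nz) (Fin ny) ℝ) (R : Matrix (Fin nz) (Fin nz) ℝ)
    (S : Matrix (Fin ny) (Fin ny) ℝ) : Matrix (Fin ny) (Fin nz) ℝ :=
  (A * S * Aᵀ + Q) * Cᵀ * (Rt A Q C R S)⁻¹

/-- Closed loop matrix `Ã(Σ)`. -/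
def Atil {ny nz nd : ℕ} (A Q : Matrix (Fin ny) (Fin ny) ℝ) (G : Matrix (Fin ny) (Fin nd) ℝ)
    (C : Matrix (Fin nz) (Fin ny) ℝ) (R : Matrix (Fin nz) (Fin nz) ℝ)
    (S : Matrix (Fin ny) (Fin ny) ℝ) : Matrix (Fin ny) (Fin ny) ℝ :=
  (1 - Kg A Q C R S * C) * (1 - G * Mg A Q G C R S * C) * A

/-- `F̃(Σ)`. -/
def Ftil {ny nz nd : ℕ} (A Q : Matrix (Fin ny) (Fin ny) ℝ) (G : Matrix (Fin ny) (Fin nd) ℝ)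
    (C : Matrix (Fin nz) (Fin ny) ℝ) (R : Matrix (Fin nz) (Fin nz) ℝ)
    (S : Matrix (Fin ny) (Fin ny) ℝ) : Matrix (Fin ny) (Fin ny) ℝ :=
  -((1 - Kg A Q C R S * C) * (1 - G * Mg A Q G C R S * C))

/-- `W̃(Σ)`. -/
def Wtil {ny nz nd : ℕ} (A Q : Matrix (Fin ny) (Fin ny) ℝ) (G : Matrix (Fin ny) (Fin nd) ℝ)
    (C : Matrix (Fin nz) (Fin ny) ℝ) (R : Matrix (Fin nz) (Fin nz) ℝ)
    (S : Matrix (Fin ny) (Fin ny) ℝ) : Matrix (Fin ny) (Fin nz) ℝ :=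
  G * Mg A Q G C R S - Kg A Q C R S * C * G * Mg A Q G C R S + Kg A Q C R S

/-- The state error covariance update map `ρ(Σ)`. -/
def rho {ny nz nd : ℕ} (A Q : Matrix (Fin ny) (Fin ny) ℝ) (G : Matrix (Fin ny) (Fin nd) ℝ)
    (C : Matrix (Fin nz) (Fin ny) ℝ) (R : Matrix (Fin nz) (Fin nz) ℝ)
    (S : Matrix (Fin ny) (Fin ny) ℝ) : Matrix (Fin ny) (Fin ny) ℝ :=
  Atil A Q G C R S * S * (Atil A Q G C R S)ᵀ
    + Ftil A Q G C R S * Q * (Ftil A Q G C R S)ᵀ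
    + Wtil A Q G C R S * R * (Wtil A Q G C R S)ᵀ

/-- The unknown-input error covariance update map `ρᵈ(Σ)`. -/
def rhod {ny nz nd : ℕ} (A Q : Matrix (Fin ny) (Fin ny) ℝ) (G : Matrix (Fin ny) (Fin nd) ℝ)
    (C : Matrix (Fin nz) (Fin ny) ℝ) (R : Matrix (Fin nz) (Fin nz) ℝ)
    (S : Matrix (Fin ny) (Fin ny) ℝ) : Matrix (Fin nd) (Fin nd) ℝ :=
  ((C * G)ᵀ * (Rt A Q C R S)⁻¹ * (C * G))⁻¹

/-- The k-horizon map `φ_k = ρ_k ∘ ⋯ ∘ ρ_1`, where step `t` (here `t = k+1`) uses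
the data `(A_{t-1}, Q_{t-1}, G_{t-1}, C_t, R_t)`. -/
def phiMap {ny nz nd : ℕ} (A Q : ℕ → Matrix (Fin ny) (Fin ny) ℝ)
    (G : ℕ → Matrix (Fin ny) (Fin nd) ℝ) (C : ℕ → Matrix (Fin nz) (Fin ny) ℝ)
    (R : ℕ → Matrix (Fin nz) (Fin nz) ℝ) :
    ℕ → Matrix (Fin ny) (Fin ny) ℝ → Matrix (Fin ny) (Fin ny) ℝ
  | 0, S => S
  | k + 1, S => rho (A k) (Q k) (G k) (C (k + 1)) (R (k + 1)) (phiMap A Q G C R k S)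

/-- `Ψ_k := Ã_k Ã_{k-1} ⋯ Ã_1` where `Ã_t` is evaluated at `Σ_{t-1} = φ_{t-1}(Σ₀)`
with step-`t` data (and `Ψ_0 = I`). -/
def PsiProd {ny nz nd : ℕ} (A Q : ℕ → Matrix (Fin ny) (Fin ny) ℝ)
    (G : ℕ → Matrix (Fin ny) (Fin nd) ℝ) (C : ℕ → Matrix (Fin nz) (Fin ny) ℝ)
    (R : ℕ → Matrix (Fin nz) (Fin nz) ℝ) (S0 : Matrix (Fin ny) (Fin ny) ℝ) :
    ℕ → Matrix (Fin ny) (Fin ny) ℝ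
  | 0 => 1
  | k + 1 =>
      Atil (A k) (Q k) (G k) (C (k + 1)) (R (k + 1)) (phiMap A Q G C R k S0) *
        PsiProd A Q G C R S0 k

section Helpers
lemma psdT {m n : ℕ} (B : Matrix (Fin m) (Fin n) ℝ) {P : Matrix (Fin n) (Fin n) ℝ}
    (hP : P.PosSemidef) : (B * P * Bᵀ).PosSemidef := by
  simpa [Matrix.conjTranspose_eq_transpose_of_trivial] using hP.mul_mul_conjTranspose_same B

lemma psd_smul' {n : ℕ} {P : Matrix (Fin n) (Fin n) ℝ} (hP : P.PosSemidef) {a : ℝ} (ha : 0 ≤ a) :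
    (a • P).PosSemidef := by
  refine posSemidef_iff_dotProduct_mulVec.mpr ⟨?_, ?_⟩
  · show (a • P)ᴴ = a • P
    rw [conjTranspose_smul, hP.1.eq, star_trivial]
  · intro x
    simp only [Matrix.smul_mulVec, dotProduct_smul, smul_eq_mul]
    exact mul_nonneg ha (hP.dotProduct_mulVec_nonneg x)

lemma mulVec_ne {nz nd : ℕ} {F : Matrix (Fin nz) (Fin nd) ℝ} (h : F.rank = nd)
    {x : Fin nd → ℝ} (hx : x ≠ 0) : F *ᵥ x ≠ 0 := by
  have h1 := LinearMap.finrank_range_add_finrank_ker F.mulVecLin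
  rw [Matrix.rank] at h
  have hdom : Module.finrank ℝ (Fin nd → ℝ) = nd := by simp
  rw [hdom, h] at h1
  have hker : LinearMap.ker F.mulVecLin = ⊥ := Submodule.finrank_eq_zero.mp (by omega)
  intro hc
  exact hx ((LinearMap.ker_eq_bot.mp hker) (by simpa using hc))

lemma sandwich_posdef {nz nd : ℕ} {F : Matrix (Fin nz) (Fin nd) ℝ} {X : Matrix (Fin nz) (Fin nz) ℝ}
    (hX : X.PosDef) (hF : F.rank = nd) : (Fᵀ * X * F).PosDef := by
  refine posDef_iff_dotProduct_mulVec.mpr ⟨?_, ?_⟩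
  · show (Fᵀ * X * F)ᴴ = _
    rw [conjTranspose_mul, conjTranspose_mul, hX.1.eq]
    simp [Matrix.conjTranspose_eq_transpose_of_trivial, Matrix.mul_assoc]
  · intro x hx
    have h1 : (Fᵀ * X * F) *ᵥ x = Fᵀ *ᵥ (X *ᵥ (F *ᵥ x)) := by
      simp [Matrix.mul_assoc, mulVec_mulVec]
    rw [h1, star_trivial, dotProduct_mulVec, vecMul_transpose]
    have := hX.dotProduct_mulVec_pos (mulVec_ne hF hx)
    rwa [star_trivial] at this
end Helpers

section Step
variable {ny nz nd : ℕ}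

/-- fixed-gain update -/
def gfun (A Q : Matrix (Fin ny) (Fin ny) ℝ) (C : Matrix (Fin nz) (Fin ny) ℝ)
    (R : Matrix (Fin nz) (Fin nz) ℝ) (S : Matrix (Fin ny) (Fin ny) ℝ)
    (W : Matrix (Fin ny) (Fin nz) ℝ) : Matrix (Fin ny) (Fin ny) ℝ :=
  (1 - W * C) * (A * S * Aᵀ + Q) * (1 - W * C)ᵀ + W * R * Wᵀ

lemma rep (A Q : Matrix (Fin ny) (Fin ny) ℝ) (G : Matrix (Fin ny) (Fin nd) ℝ)
    (C : Matrix (Fin nz) (Fin ny) ℝ) (R : Matrix (Fin nz) (Fin nz) ℝ)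
    (S : Matrix (Fin ny) (Fin ny) ℝ)
    (K : Matrix (Fin ny) (Fin nz) ℝ) (M : Matrix (Fin nd) (Fin nz) ℝ) :
    ((1-K*C)*(1-G*M*C)*A) * S * ((1-K*C)*(1-G*M*C)*A)ᵀ
    + (-((1-K*C)*(1-G*M*C))) * Q * (-((1-K*C)*(1-G*M*C)))ᵀ
    + (G * M - K * C * G * M + K) * R * (G * M - K * C * G * M + K)ᵀ
    = gfun A Q C R S (G * M - K * C * G * M + K) := by
  unfold gfun
  simp only [transpose_mul, transpose_sub, transpose_add, transpose_neg, transpose_one,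
    Matrix.mul_add, Matrix.add_mul, Matrix.sub_mul, Matrix.mul_sub, Matrix.mul_assoc,
    Matrix.mul_one, Matrix.one_mul, Matrix.neg_mul, Matrix.mul_neg,
    neg_neg, neg_sub, neg_add]
  abel

lemma rho_eq_gfun (A Q : Matrix (Fin ny) (Fin ny) ℝ) (G : Matrix (Fin ny) (Fin nd) ℝ)
    (C : Matrix (Fin nz) (Fin ny) ℝ) (R : Matrix (Fin nz) (Fin nz) ℝ)
    (S : Matrix (Fin ny) (Fin ny) ℝ) :
    rho A Q G C R S = gfun A Q C R S (Wtil A Q G C R S) := by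
  unfold rho Atil Ftil Wtil
  exact rep A Q G C R S (Kg A Q C R S) (Mg A Q G C R S)

lemma gexpand (A Q : Matrix (Fin ny) (Fin ny) ℝ) (C : Matrix (Fin nz) (Fin ny) ℝ)
    (R : Matrix (Fin nz) (Fin nz) ℝ) (S : Matrix (Fin ny) (Fin ny) ℝ)
    (W : Matrix (Fin ny) (Fin nz) ℝ) :
    gfun A Q C R S W = (A * S * Aᵀ + Q) - W * (C * (A * S * Aᵀ + Q))
      - ((A * S * Aᵀ + Q) * Cᵀ) * Wᵀ + W * Rt A Q C R S * Wᵀ := by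
  unfold gfun Rt
  simp only [transpose_mul, transpose_sub, transpose_add, transpose_one,
    Matrix.mul_add, Matrix.add_mul, Matrix.sub_mul, Matrix.mul_sub, Matrix.mul_assoc,
    Matrix.mul_one, Matrix.one_mul, Matrix.neg_mul, Matrix.mul_neg,
    neg_neg, neg_sub, neg_add]
  abel

lemma gdiff (A Q : Matrix (Fin ny) (Fin ny) ℝ) (C : Matrix (Fin nz) (Fin ny) ℝ)
    (R : Matrix (Fin nz) (Fin nz) ℝ) (S1 S2 : Matrix (Fin ny) (Fin ny) ℝ)
    (W : Matrix (Fin ny) (Fin nz) ℝ) :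
    gfun A Q C R S2 W - gfun A Q C R S1 W
      = ((1 - W * C) * A) * (S2 - S1) * ((1 - W * C) * A)ᵀ := by
  unfold gfun
  simp only [transpose_mul, transpose_sub, transpose_add, transpose_one,
    Matrix.mul_add, Matrix.add_mul, Matrix.sub_mul, Matrix.mul_sub, Matrix.mul_assoc,
    Matrix.mul_one, Matrix.one_mul, Matrix.neg_mul, Matrix.mul_neg,
    neg_neg, neg_sub, neg_add]
  abel

lemma Rt_posdef {A Q : Matrix (Fin ny) (Fin ny) ℝ} {C : Matrix (Fin nz) (Fin ny) ℝ}
    {R : Matrix (Fin nz) (Fin nz) ℝ} {S : Matrix (Fin ny) (Fin ny) ℝ}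
    (hS : S.PosSemidef) (hQ : Q.PosDef) (hR : R.PosDef) : (Rt A Q C R S).PosDef := by
  unfold Rt
  exact Matrix.PosDef.posSemidef_add (psdT C ((psdT A hS).add hQ.posSemidef)) hR

/-- The key optimality identity. -/
lemma key {A Q : Matrix (Fin ny) (Fin ny) ℝ} {G : Matrix (Fin ny) (Fin nd) ℝ}
    {C : Matrix (Fin nz) (Fin ny) ℝ} {R : Matrix (Fin nz) (Fin nz) ℝ}
    {S : Matrix (Fin ny) (Fin ny) ℝ}
    (hS : S.PosSemidef) (hQ : Q.PosDef) (hR : R.PosDef) (hF : (C * G).rank = nd) :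
    Wtil A Q G C R S * (C * G) = G ∧
    ∀ W' : Matrix (Fin ny) (Fin nz) ℝ, W' * (C * G) = G →
      gfun A Q C R S W' - rho A Q G C R S
        = (W' - Wtil A Q G C R S) * Rt A Q C R S * (W' - Wtil A Q G C R S)ᵀ := by
  have hRt : (Rt A Q C R S).PosDef := Rt_posdef hS hQ hR
  have hRtd : IsUnit (Rt A Q C R S).det := isUnit_iff_ne_zero.mpr (ne_of_gt hRt.det_pos)
  have hNn : ((C*G)ᵀ * (Rt A Q C R S)⁻¹ * (C*G)).PosDef := sandwich_posdef hRt.inv hF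
  have hNd : IsUnit ((C*G)ᵀ * (Rt A Q C R S)⁻¹ * (C*G)).det :=
    isUnit_iff_ne_zero.mpr (ne_of_gt hNn.det_pos)
  have hRts : (Rt A Q C R S)ᵀ = Rt A Q C R S := by
    rw [← conjTranspose_eq_transpose_of_trivial, hRt.1.eq]
  have hNni : (((C*G)ᵀ * (Rt A Q C R S)⁻¹ * (C*G))⁻¹)ᵀ = ((C*G)ᵀ * (Rt A Q C R S)⁻¹ * (C*G))⁻¹ := by
    rw [transpose_nonsing_inv, ← conjTranspose_eq_transpose_of_trivial, hNn.1.eq]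
  have hSbs : (A * S * Aᵀ + Q)ᵀ = A * S * Aᵀ + Q := by
    have hs : Sᵀ = S := by rw [← conjTranspose_eq_transpose_of_trivial, hS.1.eq]
    have hq : Qᵀ = Q := by rw [← conjTranspose_eq_transpose_of_trivial, hQ.1.eq]
    simp [transpose_add, transpose_mul, hs, hq, Matrix.mul_assoc]
  -- gain identities
  have hMF : Mg A Q G C R S * (C * G) = 1 := by
    unfold Mg
    rw [Matrix.mul_assoc, Matrix.mul_assoc, ← Matrix.mul_assoc ((C*G)ᵀ),
      Matrix.nonsing_inv_mul _ hNd]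
  have hWF : Wtil A Q G C R S * (C * G) = G := by
    unfold Wtil
    rw [Matrix.add_mul, Matrix.sub_mul, Matrix.mul_assoc G, hMF,
      Matrix.mul_assoc (Kg A Q C R S * C * G), hMF]
    simp only [Matrix.mul_one, Matrix.mul_assoc]
    abel
  refine ⟨hWF, ?_⟩
  intro W' hW'F
  have hKR : Kg A Q C R S * Rt A Q C R S = (A * S * Aᵀ + Q) * Cᵀ := by
    unfold Kg
    rw [Matrix.mul_assoc, Matrix.nonsing_inv_mul _ hRtd, Matrix.mul_one]
  have hMR : Mg A Q G C R S * Rt A Q C R S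
      = ((C*G)ᵀ * (Rt A Q C R S)⁻¹ * (C*G))⁻¹ * (C*G)ᵀ := by
    unfold Mg
    rw [Matrix.mul_assoc, Matrix.nonsing_inv_mul _ hRtd, Matrix.mul_one]
  -- Z
  set Z : Matrix (Fin ny) (Fin nz) ℝ :=
    (G - Kg A Q C R S * (C * G)) * (((C*G)ᵀ * (Rt A Q C R S)⁻¹ * (C*G))⁻¹ * (C*G)ᵀ) with hZdef
  have hWR : Wtil A Q G C R S * Rt A Q C R S = (A * S * Aᵀ + Q) * Cᵀ + Z := by
    unfold Wtil
    rw [Matrix.add_mul, Matrix.sub_mul, Matrix.mul_assoc G, hMR, hKR,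
      Matrix.mul_assoc (Kg A Q C R S * C * G), hMR, hZdef]
    simp only [Matrix.sub_mul, Matrix.mul_assoc]
    abel
  have hSbC : (A * S * Aᵀ + Q) * Cᵀ = Wtil A Q G C R S * Rt A Q C R S - Z := by
    rw [hWR]; abel
  have hCSb : C * (A * S * Aᵀ + Q) = Rt A Q C R S * (Wtil A Q G C R S)ᵀ - Zᵀ := by
    have := congrArg Matrix.transpose hSbC
    rw [transpose_mul, transpose_sub, transpose_mul, hSbs, hRts] at this
    simpa [transpose_transpose] using this
  -- D F = 0 consequences
  have hDF : (W' - Wtil A Q G C R S) * (C * G) = 0 := by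
    rw [Matrix.sub_mul, hW'F, hWF, sub_self]
  have hZt : Zᵀ = (C * G) * ((((C*G)ᵀ * (Rt A Q C R S)⁻¹ * (C*G))⁻¹) * ((G - Kg A Q C R S * (C * G))ᵀ)) := by
    rw [hZdef, transpose_mul, transpose_mul, transpose_transpose, hNni, Matrix.mul_assoc]
  have hDZ : (W' - Wtil A Q G C R S) * Zᵀ = 0 := by
    rw [hZt, ← Matrix.mul_assoc, hDF, Matrix.zero_mul]
  have hZD : Z * (W' - Wtil A Q G C R S)ᵀ = 0 := by
    have := congrArg Matrix.transpose hDZ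
    rw [transpose_mul, transpose_transpose, transpose_zero] at this
    exact this
  -- main algebra
  have main : gfun A Q C R S W' - gfun A Q C R S (Wtil A Q G C R S)
      - (W' - Wtil A Q G C R S) * Rt A Q C R S * (W' - Wtil A Q G C R S)ᵀ
      = (W' - Wtil A Q G C R S) * Zᵀ + Z * (W' - Wtil A Q G C R S)ᵀ := by
    rw [gexpand A Q C R S W', gexpand A Q C R S (Wtil A Q G C R S), hCSb, hSbC]
    simp only [transpose_sub, Matrix.mul_add, Matrix.add_mul, Matrix.sub_mul, Matrix.mul_sub,
      Matrix.mul_assoc]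
    abel
  rw [hDZ, hZD, add_zero] at main
  rw [rho_eq_gfun]
  exact sub_eq_zero.mp main

lemma rho_psd {A Q : Matrix (Fin ny) (Fin ny) ℝ} {G : Matrix (Fin ny) (Fin nd) ℝ}
    {C : Matrix (Fin nz) (Fin ny) ℝ} {R : Matrix (Fin nz) (Fin nz) ℝ}
    {S : Matrix (Fin ny) (Fin ny) ℝ}
    (hS : S.PosSemidef) (hQ : Q.PosDef) (hR : R.PosDef) : (rho A Q G C R S).PosSemidef := by
  unfold rho
  exact ((psdT _ hS).add (psdT _ hQ.posSemidef)).add (psdT _ hR.posSemidef)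

lemma step_mono {A Q : Matrix (Fin ny) (Fin ny) ℝ} {G : Matrix (Fin ny) (Fin nd) ℝ}
    {C : Matrix (Fin nz) (Fin ny) ℝ} {R : Matrix (Fin nz) (Fin nz) ℝ}
    {S1 S2 : Matrix (Fin ny) (Fin ny) ℝ}
    (hQ : Q.PosDef) (hR : R.PosDef) (hF : (C * G).rank = nd)
    (hS1 : S1.PosSemidef) (hS2 : S2.PosSemidef) (hd : (S2 - S1).PosSemidef) :
    (rho A Q G C R S2 - rho A Q G C R S1).PosSemidef := by
  set W2 := Wtil A Q G C R S2 with hW2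
  have k1 := (key (A := A) hS1 hQ hR hF).2 W2 ((key (A := A) hS2 hQ hR hF).1)
  have e : rho A Q G C R S2 - rho A Q G C R S1
      = ((1 - W2 * C) * A) * (S2 - S1) * ((1 - W2 * C) * A)ᵀ
        + (W2 - Wtil A Q G C R S1) * Rt A Q C R S1 * (W2 - Wtil A Q G C R S1)ᵀ := by
    rw [rho_eq_gfun A Q G C R S2, ← hW2, ← gdiff A Q C R S1 S2 W2, ← k1]
    abel
  rw [e]
  exact (psdT _ hd).add (psdT _ (Rt_posdef hS1 hQ hR).posSemidef)

lemma gaffine (A Q : Matrix (Fin ny) (Fin ny) ℝ) (C : Matrix (Fin nz) (Fin ny) ℝ)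
    (R : Matrix (Fin nz) (Fin nz) ℝ) (S1 S2 : Matrix (Fin ny) (Fin ny) ℝ)
    (W : Matrix (Fin ny) (Fin nz) ℝ) (α : ℝ) :
    gfun A Q C R (α • S1 + (1 - α) • S2) W
      = α • gfun A Q C R S1 W + (1 - α) • gfun A Q C R S2 W := by
  unfold gfun
  simp only [Matrix.mul_add, Matrix.add_mul, Matrix.mul_smul, Matrix.smul_mul, smul_add,
    Matrix.mul_assoc, smul_smul]
  module

lemma step_concave {A Q : Matrix (Fin ny) (Fin ny) ℝ} {G : Matrix (Fin ny) (Fin nd) ℝ}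
    {C : Matrix (Fin nz) (Fin ny) ℝ} {R : Matrix (Fin nz) (Fin nz) ℝ}
    {S1 S2 : Matrix (Fin ny) (Fin ny) ℝ}
    (hQ : Q.PosDef) (hR : R.PosDef) (hF : (C * G).rank = nd)
    (hS1 : S1.PosSemidef) (hS2 : S2.PosSemidef) {α : ℝ} (h0 : 0 ≤ α) (h1 : α ≤ 1) :
    (rho A Q G C R (α • S1 + (1 - α) • S2)
      - (α • rho A Q G C R S1 + (1 - α) • rho A Q G C R S2)).PosSemidef := by
  have hSm : (α • S1 + (1 - α) • S2).PosSemidef :=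
    (psd_smul' hS1 h0).add (psd_smul' hS2 (by linarith))
  set Wm := Wtil A Q G C R (α • S1 + (1 - α) • S2) with hWm
  have hWmF := (key (A := A) hSm hQ hR hF).1
  have k1 := (key (A := A) hS1 hQ hR hF).2 Wm hWmF
  have k2 := (key (A := A) hS2 hQ hR hF).2 Wm hWmF
  have e : rho A Q G C R (α • S1 + (1 - α) • S2)
      - (α • rho A Q G C R S1 + (1 - α) • rho A Q G C R S2)
      = α • (gfun A Q C R S1 Wm - rho A Q G C R S1)
        + (1 - α) • (gfun A Q C R S2 Wm - rho A Q G C R S2) := by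
    rw [rho_eq_gfun A Q G C R (α • S1 + (1 - α) • S2), ← hWm, gaffine]
    module
  rw [e, k1, k2]
  exact (psd_smul' (psdT _ (Rt_posdef hS1 hQ hR).posSemidef) h0).add
    (psd_smul' (psdT _ (Rt_posdef hS2 hQ hR).posSemidef) (by linarith))

end Step

section Phi
variable {ny nz nd : ℕ}
  (A Q : ℕ → Matrix (Fin ny) (Fin ny) ℝ) (G : ℕ → Matrix (Fin ny) (Fin nd) ℝ)
  (C : ℕ → Matrix (Fin nz) (Fin ny) ℝ) (R : ℕ → Matrix (Fin nz) (Fin nz) ℝ)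

lemma phi_psd (hQ : ∀ k, (Q k).PosDef) (hR : ∀ k, (R k).PosDef) :
    ∀ k (S : Matrix (Fin ny) (Fin ny) ℝ), S.PosSemidef → (phiMap A Q G C R k S).PosSemidef
  | 0, S, hS => hS
  | k + 1, S, hS => rho_psd (phi_psd hQ hR k S hS) (hQ k) (hR (k + 1))

lemma phi_mono (hQ : ∀ k, (Q k).PosDef) (hR : ∀ k, (R k).PosDef)
    (hF : ∀ k, (C (k + 1) * G k).rank = nd) :
    ∀ k (S1 S2 : Matrix (Fin ny) (Fin ny) ℝ), S1.PosSemidef → S2.PosSemidef →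
      (S2 - S1).PosSemidef →
      (phiMap A Q G C R k S2 - phiMap A Q G C R k S1).PosSemidef
  | 0, S1, S2, _, _, hd => hd
  | k + 1, S1, S2, hS1, hS2, hd =>
      step_mono (hQ k) (hR (k + 1)) (hF k)
        (phi_psd A Q G C R hQ hR k S1 hS1) (phi_psd A Q G C R hQ hR k S2 hS2)
        (phi_mono hQ hR hF k S1 S2 hS1 hS2 hd)

lemma phi_concave (hQ : ∀ k, (Q k).PosDef) (hR : ∀ k, (R k).PosDef)
    (hF : ∀ k, (C (k + 1) * G k).rank = nd) :
    ∀ k {α : ℝ}, 0 ≤ α → α ≤ 1 → ∀ (S1 S2 : Matrix (Fin ny) (Fin ny) ℝ),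
      S1.PosSemidef → S2.PosSemidef →
      (phiMap A Q G C R k (α • S1 + (1 - α) • S2)
        - (α • phiMap A Q G C R k S1 + (1 - α) • phiMap A Q G C R k S2)).PosSemidef
  | 0, α, h0, h1, S1, S2, hS1, hS2 => by simp [phiMap, Matrix.PosSemidef.zero]
  | k + 1, α, h0, h1, S1, S2, hS1, hS2 => by
      have hP1 := phi_psd A Q G C R hQ hR k S1 hS1
      have hP2 := phi_psd A Q G C R hQ hR k S2 hS2
      have hmix : (α • phiMap A Q G C R k S1 + (1 - α) • phiMap A Q G C R k S2).PosSemidef :=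
        (psd_smul' hP1 h0).add (psd_smul' hP2 (by linarith))
      have hSm : (α • S1 + (1 - α) • S2).PosSemidef :=
        (psd_smul' hS1 h0).add (psd_smul' hS2 (by linarith))
      have hPm := phi_psd A Q G C R hQ hR k _ hSm
      have h1' := step_mono (A := A k) (hQ k) (hR (k + 1)) (hF k) hmix hPm
        (phi_concave hQ hR hF k h0 h1 S1 S2 hS1 hS2)
      have h2' := step_concave (A := A k) (G := G k) (hQ k) (hR (k + 1)) (hF k) hP1 hP2 h0 h1
      have := h1'.add h2'
      rwa [sub_add_sub_cancel] at this

end Phi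

/-- each k-horizon map `φ_k` (`k ≤ N`) is monotone and concave with
respect to the Loewner order. -/
theorem khorizon_monotone_concave {ny nz nd : ℕ} (N : ℕ)
    (A Q : ℕ → Matrix (Fin ny) (Fin ny) ℝ) (G : ℕ → Matrix (Fin ny) (Fin nd) ℝ)
    (C : ℕ → Matrix (Fin nz) (Fin ny) ℝ) (R : ℕ → Matrix (Fin nz) (Fin nz) ℝ)
    (hQ : ∀ k, (Q k).PosDef) (hR : ∀ k, (R k).PosDef)
    (hF : ∀ k, (C (k + 1) * G k).rank = nd) :
    (∀ k, k ≤ N → ∀ S1 S2 : Matrix (Fin ny) (Fin ny) ℝ,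
      S1.PosSemidef → S2.PosSemidef → (S2 - S1).PosSemidef →
      (phiMap A Q G C R k S2 - phiMap A Q G C R k S1).PosSemidef) ∧
    (∀ k, k ≤ N → ∀ α : ℝ, 0 ≤ α → α ≤ 1 →
      ∀ S1 S2 : Matrix (Fin ny) (Fin ny) ℝ, S1.PosSemidef → S2.PosSemidef →
      (phiMap A Q G C R k (α • S1 + (1 - α) • S2)
        - (α • phiMap A Q G C R k S1 + (1 - α) • phiMap A Q G C R k S2)).PosSemidef) := by
  
  constructor
  · intro k _ S1 S2 hS1 hS2 hd
    exact phi_mono A Q G C R hQ hR hF k S1 S2 hS1 hS2 hd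
  · intro k _ α h0 h1 S1 S2 hS1 hS2
    exact phi_concave A Q G C R hQ hR hF k h0 h1 S1 S2 hS1 hS2
end
end

section
/- The unknown-input error covariance update map ρᵈ is monotone with respect to the Loewner order: for all positive semidefinite matrices Σ₁, Σ₂ with Σ₁ ⪯ Σ₂, one has ρᵈ(Σ₁) ⪯ ρᵈ(Σ₂). -/
open Matrix BigOperators

noncomputable section

set_option linter.unusedSectionVars false

variable {n m : Type*} [Fintype n] [DecidableEq n] [Fintype m] [DecidableEq m]

lemma posDef_conj_of_injective {M : Matrix n n ℝ} (hM : M.PosDef)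
    (B : Matrix n m ℝ) (hB : Function.Injective B.mulVec) :
    (Bᵀ * M * B).PosDef := by
  rw [← conjTranspose_eq_transpose_of_trivial]
  refine PosDef.of_dotProduct_mulVec_pos (isHermitian_conjTranspose_mul_mul B hM.1) fun x hx => ?_
  have hBx : B *ᵥ x ≠ 0 := fun h => hx (hB (h.trans (mulVec_zero B).symm))
  simpa only [star_mulVec, dotProduct_mulVec, vecMul_vecMul] using hM.dotProduct_mulVec_pos hBx

lemma psd_conj {M : Matrix n n ℝ} (hM : M.PosSemidef) (B : Matrix m n ℝ) :
    (B * M * Bᵀ).PosSemidef := by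
  rw [← conjTranspose_eq_transpose_of_trivial]
  exact hM.mul_mul_conjTranspose_same B

lemma posDef_of_isUnit {S : Matrix n n ℝ} (hS : S.PosSemidef) (hu : IsUnit S) : S.PosDef := by
  refine PosDef.of_dotProduct_mulVec_pos hS.1 fun x hx => ?_
  have hSx : S *ᵥ x ≠ 0 := fun h =>
    hx (mulVec_injective_iff_isUnit.mpr hu (h.trans (mulVec_zero S).symm))
  rcases (hS.dotProduct_mulVec_nonneg x).lt_or_eq with h | h
  · exact h
  · exact absurd ((hS.dotProduct_mulVec_zero_iff x).mp h.symm) hSx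

open scoped MatrixOrder in
def Matrix.PosSemidef.sqrt {A : Matrix n n ℝ} (_ : A.PosSemidef) : Matrix n n ℝ := CFC.sqrt A

open scoped MatrixOrder in
lemma Matrix.PosSemidef.sqrt_mul_self {A : Matrix n n ℝ} (hA : A.PosSemidef) :
    hA.sqrt * hA.sqrt = A :=
  CFC.sqrt_mul_sqrt_self A (nonneg_iff_posSemidef.mpr hA)

open scoped MatrixOrder in
lemma Matrix.PosSemidef.posSemidef_sqrt {A : Matrix n n ℝ} (hA : A.PosSemidef) :
    hA.sqrt.PosSemidef :=
  nonneg_iff_posSemidef.mp (CFC.sqrt_nonneg A)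

lemma posDef_sqrt_posDef {A : Matrix n n ℝ} (hA : A.PosDef) : hA.posSemidef.sqrt.PosDef := by
  have h1 : hA.posSemidef.sqrt * hA.posSemidef.sqrt = A := hA.posSemidef.sqrt_mul_self
  refine posDef_of_isUnit hA.posSemidef.posSemidef_sqrt ?_
  rw [Matrix.isUnit_iff_isUnit_det]
  have : hA.posSemidef.sqrt.det * hA.posSemidef.sqrt.det = A.det := by rw [← det_mul, h1]
  have hApos := hA.det_pos
  rw [← this] at hApos
  exact isUnit_iff_ne_zero.mpr (fun h => by simp [h] at hApos)

lemma inv_antitone {A B : Matrix n n ℝ} (hA : A.PosDef) (hB : B.PosDef)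
    (h : (B - A).PosSemidef) : (A⁻¹ - B⁻¹).PosSemidef := by
  set S := hA.posSemidef.sqrt with hSdef
  have hS : S.PosDef := posDef_sqrt_posDef hA
  have hSS : S * S = A := hA.posSemidef.sqrt_mul_self
  have hSsymm : Sᵀ = S := by
    have := hA.posSemidef.posSemidef_sqrt.1
    rwa [IsHermitian, conjTranspose_eq_transpose_of_trivial] at this
  have hSiu : IsUnit S.det := (Matrix.isUnit_iff_isUnit_det S).mp hS.isUnit
  have hSinv_symm : (S⁻¹)ᵀ = S⁻¹ := by rw [transpose_nonsing_inv, hSsymm]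
  have hSinv_pd : (S⁻¹).PosDef := hS.inv
  -- X = S⁻¹ B S⁻¹
  set X := S⁻¹ * B * S⁻¹ with hXdef
  have hXpd : X.PosDef := by
    have := posDef_conj_of_injective hB S⁻¹ (mulVec_injective_iff_isUnit.mpr hSinv_pd.isUnit)
    rwa [hSinv_symm] at this
  have hSAS : S⁻¹ * A * S⁻¹ = 1 := by
    rw [← hSS, ← Matrix.mul_assoc, Matrix.mul_assoc (S⁻¹ * S),
      Matrix.mul_nonsing_inv _ hSiu, Matrix.nonsing_inv_mul _ hSiu, Matrix.mul_one]
  have hX1 : (X - 1).PosSemidef := by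
    have := psd_conj h S⁻¹
    rwa [hSinv_symm, Matrix.mul_sub, Matrix.sub_mul, hSAS] at this
  -- T = sqrt (X⁻¹)
  have hXinv_pd : (X⁻¹).PosDef := hXpd.inv
  set T := hXinv_pd.posSemidef.sqrt with hTdef
  have hT : T.PosDef := posDef_sqrt_posDef hXinv_pd
  have hTT : T * T = X⁻¹ := hXinv_pd.posSemidef.sqrt_mul_self
  have hTsymm : Tᵀ = T := by
    have := hXinv_pd.posSemidef.posSemidef_sqrt.1
    rwa [IsHermitian, conjTranspose_eq_transpose_of_trivial] at this
  have hXu : IsUnit X.det := (Matrix.isUnit_iff_isUnit_det X).mp hXpd.isUnit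
  have hTcommXinv : T * X⁻¹ = X⁻¹ * T := by rw [← hTT, Matrix.mul_assoc]
  have hTcommX : T * X = X * T := by
    have h1 : (X * T) * (X⁻¹ * X) = (X * X⁻¹) * (T * X) := by
      calc (X * T) * (X⁻¹ * X) = X * (T * X⁻¹) * X := by simp only [Matrix.mul_assoc]
      _ = X * (X⁻¹ * T) * X := by rw [hTcommXinv]
      _ = (X * X⁻¹) * (T * X) := by simp only [Matrix.mul_assoc]
    simpa [Matrix.mul_nonsing_inv _ hXu, Matrix.nonsing_inv_mul _ hXu] using h1.symm
  have hTXT : T * X * T = 1 := by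
    rw [hTcommX, Matrix.mul_assoc, hTT, Matrix.mul_nonsing_inv _ hXu]
  have h1Xinv : (1 - X⁻¹).PosSemidef := by
    have := psd_conj hX1 T
    rwa [hTsymm, Matrix.mul_sub, Matrix.sub_mul, Matrix.mul_one, hTXT, hTT] at this
  -- transport back
  have hfinal := psd_conj h1Xinv S⁻¹
  rw [hSinv_symm, Matrix.mul_sub, Matrix.sub_mul] at hfinal
  have e1 : S⁻¹ * 1 * S⁻¹ = A⁻¹ := by
    rw [Matrix.mul_one, ← Matrix.mul_inv_rev, hSS]
  have e2 : S⁻¹ * X⁻¹ * S⁻¹ = B⁻¹ := by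
    rw [hXdef, Matrix.mul_inv_rev, Matrix.mul_inv_rev,
      Matrix.nonsing_inv_nonsing_inv _ hSiu]
    rw [← Matrix.mul_assoc, ← Matrix.mul_assoc, Matrix.nonsing_inv_mul _ hSiu, Matrix.one_mul,
      Matrix.mul_assoc, Matrix.mul_nonsing_inv _ hSiu, Matrix.mul_one]
  rwa [e1, e2] at hfinal

/-- the unknown-input error covariance update map `ρᵈ` is monotone
w.r.t. the Loewner order: if `Σ₁ ⪯ Σ₂` (both PSD) then `ρᵈ(Σ₁) ⪯ ρᵈ(Σ₂)`. -/
theorem input_update_monotone {ny nz nd : ℕ}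
    (A Q : Matrix (Fin ny) (Fin ny) ℝ) (G : Matrix (Fin ny) (Fin nd) ℝ)
    (C : Matrix (Fin nz) (Fin ny) ℝ) (R : Matrix (Fin nz) (Fin nz) ℝ)
    (hQ : Q.PosDef) (hR : R.PosDef) (hF : (C * G).rank = nd)
    (S1 S2 : Matrix (Fin ny) (Fin ny) ℝ)
    (h1 : S1.PosSemidef) (h2 : S2.PosSemidef) (hle : (S2 - S1).PosSemidef) :
    (rhod A Q G C R S2 - rhod A Q G C R S1).PosSemidef := by
  have hFinj : Function.Injective (C * G).mulVec := by
    have hker : LinearMap.ker (C * G).mulVecLin = ⊥ := by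
      have hrn := LinearMap.finrank_range_add_finrank_ker (C * G).mulVecLin
      have hdom : Module.finrank ℝ (Fin nd → ℝ) = nd := by
        simp [Module.finrank_fintype_fun_eq_card]
      have hr : Module.finrank ℝ (LinearMap.range (C * G).mulVecLin) = nd := hF
      rw [hdom, hr] at hrn
      exact Submodule.finrank_eq_zero.mp (by omega)
    have h := LinearMap.ker_eq_bot.mp hker
    rwa [Matrix.coe_mulVecLin] at h
  have hRtpd : ∀ S : Matrix (Fin ny) (Fin ny) ℝ, S.PosSemidef → (Rt A Q C R S).PosDef := by
    intro S hS
    have hin : (A * S * Aᵀ + Q).PosSemidef := (psd_conj hS A).add hQ.posSemidef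
    exact Matrix.PosDef.posSemidef_add (psd_conj hin C) hR
  have hRt1 := hRtpd S1 h1
  have hRt2 := hRtpd S2 h2
  have hdiff : Rt A Q C R S2 - Rt A Q C R S1 = (C * A) * (S2 - S1) * (C * A)ᵀ := by
    simp only [Rt, transpose_mul, Matrix.mul_sub, Matrix.sub_mul, Matrix.mul_add,
      Matrix.add_mul, Matrix.mul_assoc]
    abel
  have hRtmono : (Rt A Q C R S2 - Rt A Q C R S1).PosSemidef := by
    rw [hdiff]; exact psd_conj hle (C * A)
  have hinvmono : ((Rt A Q C R S1)⁻¹ - (Rt A Q C R S2)⁻¹).PosSemidef :=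
    inv_antitone hRt1 hRt2 hRtmono
  have hM1 : ((C * G)ᵀ * (Rt A Q C R S1)⁻¹ * (C * G)).PosDef :=
    posDef_conj_of_injective hRt1.inv (C * G) hFinj
  have hM2 : ((C * G)ᵀ * (Rt A Q C R S2)⁻¹ * (C * G)).PosDef :=
    posDef_conj_of_injective hRt2.inv (C * G) hFinj
  have hMdiff : ((C * G)ᵀ * (Rt A Q C R S1)⁻¹ * (C * G)
      - (C * G)ᵀ * (Rt A Q C R S2)⁻¹ * (C * G)).PosSemidef := by
    have h := psd_conj hinvmono (C * G)ᵀ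
    rw [transpose_transpose, Matrix.mul_sub, Matrix.sub_mul] at h
    exact h
  have hfin := inv_antitone hM2 hM1 hMdiff
  simpa [rhod] using hfin
end
end

section
/- Let γ ∈ (0,1] and suppose the information matrices H₁ := C₁ᵀR₁⁻¹C₁ and H₂ := C₂ᵀR₂⁻¹C₂ satisfy H₁ ⪯ γ⁻¹ H₂ and H₂ ⪯ γ⁻¹ H₁. Then for every positive semidefinite Σ, the unknown-input error covariance updates satisfy ρᵈ₁(Σ) ⪰ γ ρᵈ₂(Σ) and ρᵈ₂(Σ) ⪰ γ ρᵈ₁(Σ). -/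
open Matrix BigOperators

noncomputable section

variable {n m : ℕ}

lemma psd_conj_s15 {X : Matrix (Fin n) (Fin n) ℝ} (hX : X.PosSemidef)
    (B : Matrix (Fin m) (Fin n) ℝ) : (B * X * Bᵀ).PosSemidef := by
  simpa [Matrix.conjTranspose_eq_transpose_of_trivial] using hX.mul_mul_conjTranspose_same B

lemma psd_conj' {X : Matrix (Fin n) (Fin n) ℝ} (hX : X.PosSemidef)
    (B : Matrix (Fin n) (Fin m) ℝ) : (Bᵀ * X * B).PosSemidef := by
  simpa [Matrix.conjTranspose_eq_transpose_of_trivial] using hX.conjTranspose_mul_mul_same B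

lemma herm_tr {X : Matrix (Fin n) (Fin n) ℝ} (hX : X.IsHermitian) : Xᵀ = X := by
  simpa [Matrix.conjTranspose_eq_transpose_of_trivial] using hX.eq

lemma herm_smul {X : Matrix (Fin n) (Fin n) ℝ} (hX : X.IsHermitian) (c : ℝ) :
    (c • X).IsHermitian := by
  rw [Matrix.IsHermitian, conjTranspose_smul, hX.eq]; simp

lemma posdef_smul {X : Matrix (Fin n) (Fin n) ℝ} (hX : X.PosDef) {c : ℝ} (hc : 0 < c) :
    (c • X).PosDef := by
  refine Matrix.PosDef.of_dotProduct_mulVec_pos (herm_smul hX.1 c) (fun x hx => ?_)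
  rw [Matrix.smul_mulVec, dotProduct_smul, smul_eq_mul]
  exact mul_pos hc (by simpa using hX.dotProduct_mulVec_pos hx)

lemma psd_smul {X : Matrix (Fin n) (Fin n) ℝ} (hX : X.PosSemidef) {c : ℝ} (hc : 0 ≤ c) :
    (c • X).PosSemidef := by
  refine Matrix.PosSemidef.of_dotProduct_mulVec_nonneg (herm_smul hX.1 c) (fun x => ?_)
  rw [Matrix.smul_mulVec, dotProduct_smul, smul_eq_mul]
  exact mul_nonneg hc (by simpa using hX.dotProduct_mulVec_nonneg x)

lemma inv_sub_inv_psd {A B : Matrix (Fin n) (Fin n) ℝ} (hA : A.PosDef) (_hB : B.PosDef)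
    (h : (B - A).PosSemidef) : (A⁻¹ - B⁻¹).PosSemidef := by
  set S := (open scoped MatrixOrder in CFC.sqrt (B - A)) with hSdef
  have hS : S * S = B - A := by
    open scoped MatrixOrder in exact CFC.sqrt_mul_sqrt_self _ h.nonneg
  have hSsym : Sᵀ = S := herm_tr (by
    open scoped MatrixOrder in exact (CFC.sqrt_nonneg (B - A)).posSemidef.1)
  have hSAS : (S * A⁻¹ * S).PosSemidef := by
    have := psd_conj' hA.inv.posSemidef S
    rwa [hSsym] at this
  have hone : ((1 : Matrix (Fin n) (Fin n) ℝ) + S * A⁻¹ * S).PosDef :=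
    Matrix.PosDef.add_posSemidef Matrix.PosDef.one hSAS
  have hW := Matrix.add_mul_mul_inv_eq_sub A S 1 S hA.isUnit isUnit_one
      (by simpa using hone.isUnit)
  have hBeq : B = A + S * 1 * S := by rw [mul_one, hS]; abel
  have key : A⁻¹ - B⁻¹
      = (A⁻¹ * S) * ((1 : Matrix (Fin n) (Fin n) ℝ) + S * A⁻¹ * S)⁻¹ * (A⁻¹ * S)ᵀ := by
    rw [hBeq, hW]
    have : (A⁻¹ * S)ᵀ = S * A⁻¹ := by
      rw [Matrix.transpose_mul, hSsym, herm_tr hA.inv.1]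
    rw [this]
    simp only [inv_one]
    noncomm_ring
  rw [key]
  exact psd_conj_s15 hone.inv.posSemidef _

lemma aux_alg {P H : Matrix (Fin n) (Fin n) ℝ}
    (h1 : (P + H) * (P + H)⁻¹ = 1) (h2 : (P + H)⁻¹ * (P + H) = 1) :
    H - H * (P + H)⁻¹ * H = P - P * (P + H)⁻¹ * P := by
  have eH : H = (P + H) - P := by abel
  calc H - H * (P + H)⁻¹ * H
      = ((P + H) - P) - (((P + H) - P) * (P + H)⁻¹) * ((P + H) - P) := by rw [← eH]
    _ = P - P * (P + H)⁻¹ * P := by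
        rw [Matrix.sub_mul, h1, Matrix.sub_mul, Matrix.one_mul, Matrix.mul_sub,
            Matrix.mul_assoc P, h2, Matrix.mul_one]
        abel

lemma key_forms {P : Matrix (Fin n) (Fin n) ℝ} {R : Matrix (Fin m) (Fin m) ℝ}
    (hP : P.PosDef) (hR : R.PosDef) (C : Matrix (Fin m) (Fin n) ℝ) :
    Cᵀ * (C * P * Cᵀ + R)⁻¹ * C
      = Cᵀ * R⁻¹ * C - (Cᵀ * R⁻¹ * C) * (P⁻¹ + Cᵀ * R⁻¹ * C)⁻¹ * (Cᵀ * R⁻¹ * C) ∧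
    Cᵀ * (C * P * Cᵀ + R)⁻¹ * C
      = P⁻¹ - P⁻¹ * (P⁻¹ + Cᵀ * R⁻¹ * C)⁻¹ * P⁻¹ := by
  have hHpsd : (Cᵀ * R⁻¹ * C).PosSemidef := psd_conj' hR.inv.posSemidef C
  have hM : (P⁻¹ + Cᵀ * R⁻¹ * C).PosDef := hP.inv.add_posSemidef hHpsd
  have hW := Matrix.add_mul_mul_inv_eq_sub R C P Cᵀ hR.isUnit hP.isUnit hM.isUnit
  have hcomm : R + C * P * Cᵀ = C * P * Cᵀ + R := by abel
  have h1 : Cᵀ * (C * P * Cᵀ + R)⁻¹ * C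
      = Cᵀ * R⁻¹ * C - (Cᵀ * R⁻¹ * C) * (P⁻¹ + Cᵀ * R⁻¹ * C)⁻¹ * (Cᵀ * R⁻¹ * C) := by
    rw [← hcomm, hW]
    simp only [Matrix.mul_sub, Matrix.sub_mul, Matrix.mul_assoc]
  have hdet := (Matrix.isUnit_iff_isUnit_det _).1 hM.isUnit
  exact ⟨h1, h1.trans (aux_alg (Matrix.mul_nonsing_inv _ hdet) (Matrix.nonsing_inv_mul _ hdet))⟩

lemma smul_inv_eq {c : ℝ} (hc : c ≠ 0) {X : Matrix (Fin n) (Fin n) ℝ} (hX : IsUnit X.det) :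
    (c • X)⁻¹ = c⁻¹ • X⁻¹ :=
  Matrix.inv_eq_left_inv (by
    rw [Matrix.smul_mul, Matrix.mul_smul, smul_smul, inv_mul_cancel₀ hc, one_smul,
      Matrix.nonsing_inv_mul _ hX])

lemma inj_of_rank {F : Matrix (Fin m) (Fin n) ℝ} (h : F.rank = n) :
    Function.Injective F.mulVec := by
  have hrn := LinearMap.finrank_range_add_finrank_ker F.mulVecLin
  rw [show Module.finrank ℝ (LinearMap.range F.mulVecLin) = F.rank from rfl, h] at hrn
  have hfin : Module.finrank ℝ (Fin n → ℝ) = n := by simp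
  rw [hfin] at hrn
  have hker : LinearMap.ker F.mulVecLin = ⊥ :=
    Submodule.finrank_eq_zero.mp (by omega)
  have := LinearMap.ker_eq_bot.mp hker
  exact this

lemma posdef_conj_inj {X : Matrix (Fin m) (Fin m) ℝ} (hX : X.PosDef)
    {F : Matrix (Fin m) (Fin n) ℝ} (hF : Function.Injective F.mulVec) :
    (Fᵀ * X * F).PosDef := by
  refine Matrix.PosDef.of_dotProduct_mulVec_pos ?_ ?_
  · have : (Fᵀ * X * F)ᵀ = Fᵀ * X * F := by
      rw [Matrix.transpose_mul, Matrix.transpose_mul, Matrix.transpose_transpose,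
        herm_tr hX.1, Matrix.mul_assoc]
    simpa [Matrix.IsHermitian, Matrix.conjTranspose_eq_transpose_of_trivial] using this
  · intro x hx
    have hFx : F.mulVec x ≠ 0 := fun hc => hx (hF (by simpa [Matrix.mulVec_zero] using hc))
    have : star x ⬝ᵥ (Fᵀ * X * F) *ᵥ x = star (F *ᵥ x) ⬝ᵥ X *ᵥ (F *ᵥ x) := by
      rw [← Matrix.mulVec_mulVec, ← Matrix.mulVec_mulVec, Matrix.dotProduct_mulVec (star x) Fᵀ,
        Matrix.vecMul_transpose]
      simp [Matrix.dotProduct_mulVec]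
    rw [this]
    exact hX.dotProduct_mulVec_pos hFx

/-- The main one-sided estimate. -/
lemma master {ny nz : ℕ} (P : Matrix (Fin ny) (Fin ny) ℝ)
    (C1 C2 : Matrix (Fin nz) (Fin ny) ℝ) (R1 R2 : Matrix (Fin nz) (Fin nz) ℝ)
    (hP : P.PosDef) (hR1 : R1.PosDef) (hR2 : R2.PosDef)
    (γ : ℝ) (hγ0 : 0 < γ) (hγ1 : γ ≤ 1)
    (h12 : (γ⁻¹ • (C2ᵀ * R2⁻¹ * C2) - C1ᵀ * R1⁻¹ * C1).PosSemidef) :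
    (γ⁻¹ • (C2ᵀ * (C2 * P * C2ᵀ + R2)⁻¹ * C2) - C1ᵀ * (C1 * P * C1ᵀ + R1)⁻¹ * C1).PosSemidef := by
  have hγinv : (0:ℝ) < γ⁻¹ := inv_pos.2 hγ0
  set H1 := C1ᵀ * R1⁻¹ * C1 with hH1def
  set H2 := C2ᵀ * R2⁻¹ * C2 with hH2def
  have hH1psd : H1.PosSemidef := psd_conj' hR1.inv.posSemidef C1
  have hH2psd : H2.PosSemidef := psd_conj' hR2.inv.posSemidef C2
  have hM1 : (P⁻¹ + H1).PosDef := hP.inv.add_posSemidef hH1psd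
  have hM2 : (P⁻¹ + H2).PosDef := hP.inv.add_posSemidef hH2psd
  have hB : (P⁻¹ + γ⁻¹ • H2).PosDef := hP.inv.add_posSemidef (psd_smul hH2psd hγinv.le)
  have hA' : (γ • P⁻¹ + H2).PosDef := (posdef_smul hP.inv hγ0).add_posSemidef hH2psd
  -- the two forms
  have hD1P := (key_forms hP hR1 C1).2
  have hD2H := (key_forms hP hR2 C2).1
  rw [← hH1def] at hD1P
  rw [← hH2def] at hD2H
  -- scaled-inverse identity
  have hBeq : P⁻¹ + γ⁻¹ • H2 = γ⁻¹ • (γ • P⁻¹ + H2) := by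
    rw [smul_add, smul_smul, inv_mul_cancel₀ (ne_of_gt hγ0), one_smul]
  have hBinv : (P⁻¹ + γ⁻¹ • H2)⁻¹ = γ • (γ • P⁻¹ + H2)⁻¹ := by
    rw [hBeq, smul_inv_eq (inv_ne_zero (ne_of_gt hγ0))
        ((Matrix.isUnit_iff_isUnit_det _).1 hA'.isUnit), inv_inv]
  -- H-form of the intermediate quantity
  have hBdet := (Matrix.isUnit_iff_isUnit_det _).1 hB.isUnit
  have hfPH := aux_alg (P := P⁻¹) (H := γ⁻¹ • H2)
      (Matrix.mul_nonsing_inv _ hBdet) (Matrix.nonsing_inv_mul _ hBdet)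
  have hfH : P⁻¹ - P⁻¹ * (P⁻¹ + γ⁻¹ • H2)⁻¹ * P⁻¹
      = γ⁻¹ • (H2 - H2 * (γ • P⁻¹ + H2)⁻¹ * H2) := by
    rw [← hfPH, hBinv]
    rw [smul_sub]
    congr 1
    simp only [Matrix.smul_mul, Matrix.mul_smul, smul_smul]
    congr 1
    field_simp
  -- step Y
  have hY : ((P⁻¹ - P⁻¹ * (P⁻¹ + γ⁻¹ • H2)⁻¹ * P⁻¹)
      - (P⁻¹ - P⁻¹ * (P⁻¹ + H1)⁻¹ * P⁻¹)).PosSemidef := by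
    have hd : ((P⁻¹ + γ⁻¹ • H2) - (P⁻¹ + H1)).PosSemidef := by
      have : (P⁻¹ + γ⁻¹ • H2) - (P⁻¹ + H1) = γ⁻¹ • H2 - H1 := by abel
      rw [this]; exact h12
    have := inv_sub_inv_psd hM1 hB hd
    have hc := psd_conj_s15 this P⁻¹
    have he : P⁻¹ * ((P⁻¹ + H1)⁻¹ - (P⁻¹ + γ⁻¹ • H2)⁻¹) * P⁻¹ᵀ
        = (P⁻¹ - P⁻¹ * (P⁻¹ + γ⁻¹ • H2)⁻¹ * P⁻¹) - (P⁻¹ - P⁻¹ * (P⁻¹ + H1)⁻¹ * P⁻¹) := by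
      rw [herm_tr hP.inv.1, Matrix.mul_sub, Matrix.sub_mul]
      abel
    rwa [he] at hc
  -- step X
  have hX : (γ⁻¹ • (H2 - H2 * (P⁻¹ + H2)⁻¹ * H2)
      - γ⁻¹ • (H2 - H2 * (γ • P⁻¹ + H2)⁻¹ * H2)).PosSemidef := by
    have hd : ((P⁻¹ + H2) - (γ • P⁻¹ + H2)).PosSemidef := by
      have : (P⁻¹ + H2) - (γ • P⁻¹ + H2) = (1 - γ) • P⁻¹ := by
        rw [sub_smul, one_smul]; abel
      rw [this]; exact psd_smul hP.inv.posSemidef (by linarith)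
    have := inv_sub_inv_psd hA' hM2 hd
    have hc := psd_conj_s15 this H2
    rw [herm_tr hH2psd.1] at hc
    have he : H2 * ((γ • P⁻¹ + H2)⁻¹ - (P⁻¹ + H2)⁻¹) * H2
        = (H2 - H2 * (P⁻¹ + H2)⁻¹ * H2) - (H2 - H2 * (γ • P⁻¹ + H2)⁻¹ * H2) := by
      rw [Matrix.mul_sub, Matrix.sub_mul]
      abel
    rw [he] at hc
    rw [← smul_sub]
    exact psd_smul hc hγinv.le
  -- combine
  have hsum := hX.add hY
  have : γ⁻¹ • (H2 - H2 * (P⁻¹ + H2)⁻¹ * H2)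
        - γ⁻¹ • (H2 - H2 * (γ • P⁻¹ + H2)⁻¹ * H2)
      + ((P⁻¹ - P⁻¹ * (P⁻¹ + γ⁻¹ • H2)⁻¹ * P⁻¹) - (P⁻¹ - P⁻¹ * (P⁻¹ + H1)⁻¹ * P⁻¹))
      = γ⁻¹ • (C2ᵀ * (C2 * P * C2ᵀ + R2)⁻¹ * C2) - C1ᵀ * (C1 * P * C1ᵀ + R1)⁻¹ * C1 := by
    rw [hD1P, hD2H, hfH]
    abel
  rwa [this] at hsum

lemma one_sided {ny nz nd : ℕ}
    (A Q : Matrix (Fin ny) (Fin ny) ℝ) (G : Matrix (Fin ny) (Fin nd) ℝ)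
    (C1 C2 : Matrix (Fin nz) (Fin ny) ℝ) (R1 R2 : Matrix (Fin nz) (Fin nz) ℝ)
    (hQ : Q.PosDef) (hR1 : R1.PosDef) (hR2 : R2.PosDef)
    (hF1 : (C1 * G).rank = nd) (hF2 : (C2 * G).rank = nd)
    (γ : ℝ) (hγ0 : 0 < γ) (hγ1 : γ ≤ 1)
    (h12 : (γ⁻¹ • (C2ᵀ * R2⁻¹ * C2) - C1ᵀ * R1⁻¹ * C1).PosSemidef)
    (S : Matrix (Fin ny) (Fin ny) ℝ) (hS : S.PosSemidef) :
    (rhod A Q G C1 R1 S - γ • rhod A Q G C2 R2 S).PosSemidef := by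
  have hγinv : (0:ℝ) < γ⁻¹ := inv_pos.2 hγ0
  have hP : (A * S * Aᵀ + Q).PosDef := Matrix.PosDef.posSemidef_add (psd_conj_s15 hS A) hQ
  set P := A * S * Aᵀ + Q with hPdef
  have hRt1 : Rt A Q C1 R1 S = C1 * P * C1ᵀ + R1 := rfl
  have hRt2 : Rt A Q C2 R2 S = C2 * P * C2ᵀ + R2 := rfl
  have hRt1pd : (C1 * P * C1ᵀ + R1).PosDef :=
    Matrix.PosDef.posSemidef_add (psd_conj_s15 hP.posSemidef C1) hR1
  have hRt2pd : (C2 * P * C2ᵀ + R2).PosDef :=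
    Matrix.PosDef.posSemidef_add (psd_conj_s15 hP.posSemidef C2) hR2
  set N1 := (C1 * G)ᵀ * (C1 * P * C1ᵀ + R1)⁻¹ * (C1 * G) with hN1def
  set N2 := (C2 * G)ᵀ * (C2 * P * C2ᵀ + R2)⁻¹ * (C2 * G) with hN2def
  have hN1 : N1.PosDef := posdef_conj_inj hRt1pd.inv (inj_of_rank hF1)
  have hN2 : N2.PosDef := posdef_conj_inj hRt2pd.inv (inj_of_rank hF2)
  have hmid := master P C1 C2 R1 R2 hP hR1 hR2 γ hγ0 hγ1 h12
  have hconj := psd_conj' hmid G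
  have hdiff : (γ⁻¹ • N2 - N1).PosSemidef := by
    have he : Gᵀ * (γ⁻¹ • (C2ᵀ * (C2 * P * C2ᵀ + R2)⁻¹ * C2)
        - C1ᵀ * (C1 * P * C1ᵀ + R1)⁻¹ * C1) * G = γ⁻¹ • N2 - N1 := by
      rw [hN1def, hN2def]
      simp only [Matrix.mul_sub, Matrix.sub_mul, Matrix.mul_smul, Matrix.smul_mul,
        Matrix.transpose_mul, Matrix.mul_assoc]
    rwa [he] at hconj
  have h1 := inv_sub_inv_psd hN1 (posdef_smul hN2 hγinv) hdiff
  rw [smul_inv_eq (inv_ne_zero (ne_of_gt hγ0))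
      ((Matrix.isUnit_iff_isUnit_det _).1 hN2.isUnit), inv_inv] at h1
  have e1 : rhod A Q G C1 R1 S = N1⁻¹ := by rw [rhod, hRt1, hN1def]
  have e2 : rhod A Q G C2 R2 S = N2⁻¹ := by rw [rhod, hRt2, hN2def]
  rw [e1, e2]
  exact h1

/-- if the information matrices `H_i = C_iᵀ R_i⁻¹ C_i` of two sensor
models satisfy `H₁ ⪯ γ⁻¹H₂` and `H₂ ⪯ γ⁻¹H₁` for some `γ ∈ (0,1]`, then for every
PSD `Σ` the unknown-input covariance updates satisfy `ρᵈ₁(Σ) ⪰ γρᵈ₂(Σ)` and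
`ρᵈ₂(Σ) ⪰ γρᵈ₁(Σ)`. -/
theorem input_update_continuity {ny nz nd : ℕ}
    (A Q : Matrix (Fin ny) (Fin ny) ℝ) (G : Matrix (Fin ny) (Fin nd) ℝ)
    (C1 C2 : Matrix (Fin nz) (Fin ny) ℝ) (R1 R2 : Matrix (Fin nz) (Fin nz) ℝ)
    (hA : IsUnit A.det) (hQ : Q.PosDef) (hR1 : R1.PosDef) (hR2 : R2.PosDef)
    (hF1 : (C1 * G).rank = nd) (hF2 : (C2 * G).rank = nd)
    (γ : ℝ) (hγ0 : 0 < γ) (hγ1 : γ ≤ 1)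
    (h12 : (γ⁻¹ • (C2ᵀ * R2⁻¹ * C2) - C1ᵀ * R1⁻¹ * C1).PosSemidef)
    (h21 : (γ⁻¹ • (C1ᵀ * R1⁻¹ * C1) - C2ᵀ * R2⁻¹ * C2).PosSemidef) :
    ∀ S : Matrix (Fin ny) (Fin ny) ℝ, S.PosSemidef →
      (rhod A Q G C1 R1 S - γ • rhod A Q G C2 R2 S).PosSemidef ∧
      (rhod A Q G C2 R2 S - γ • rhod A Q G C1 R1 S).PosSemidef := by
  intro S hS
  exact ⟨one_sided A Q G C1 C2 R1 R2 hQ hR1 hR2 hF1 hF2 γ hγ0 hγ1 h12 S hS,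
    one_sided A Q G C2 C1 R2 R1 hQ hR2 hR1 hF2 hF1 γ hγ0 hγ1 h21 S hS⟩
end
end
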